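/- If f : [0,1] → [0,1] and g : [0,1] → [0,1] are continuous surjections each having at least two surjective intervals, then the composition f ∘ g has at least three surjective intervals. -/

import Mathlib

open Set Filter Topology

/-- A surjective interval of a map `f : [0,1] → [0,1]`: a closed interval `A ⊆ [0,1]` with
`f(A) = [0,1]` such that no proper closed subinterval of `A` maps onto `[0,1]`. -/
def SurjInterval (f : ℝ → ℝ) (A : Set ℝ) : Prop :=
  ∃ a b : ℝ, a ≤ b ∧ A = Set.Icc a b ∧ A ⊆ Set.Icc 0 1 ∧
    f '' A = Set.Icc 0 1 ∧
    ∀ c d : ℝ, Set.Icc c d ⊂ A → f '' Set.Icc c d ≠ Set.Icc (0 : ℝ) 1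

/-- The right accessible set of a surjective interval `A`:
`R(A) = {x ∈ A : f y ≠ f x for all y ∈ A with y > x}`. -/
def rightAccessible (f : ℝ → ℝ) (A : Set ℝ) : Set ℝ :=
  {x ∈ A | ∀ y ∈ A, x < y → f y ≠ f x}

/-- Two nonempty `Icc`s that are equal as sets have equal endpoints. -/
lemma Icc_eq_endpoints {a b c d : ℝ} (hab : a ≤ b) (h : Set.Icc a b = Set.Icc c d) :
    a = c ∧ b = d := by
  have hcd : c ≤ d := by
    rcases (Set.nonempty_Icc.2 hab) with ⟨x, hx⟩
    rw [h] at hx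
    exact le_trans hx.1 hx.2
  have ha : a ∈ Set.Icc c d := h ▸ Set.left_mem_Icc.2 hab
  have hb : b ∈ Set.Icc c d := h ▸ Set.right_mem_Icc.2 hab
  have hc : c ∈ Set.Icc a b := h ▸ Set.left_mem_Icc.2 hcd
  have hd : d ∈ Set.Icc a b := h ▸ Set.right_mem_Icc.2 hcd
  exact ⟨le_antisymm hc.1 ha.1, le_antisymm hb.2 hd.2⟩

lemma uIcc_eq_Icc_minmax (u v : ℝ) : Set.uIcc u v = Set.Icc (min u v) (max u v) := by
  rcases le_total u v with h | h
  · rw [Set.uIcc_of_le h, min_eq_left h, max_eq_right h]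
  · rw [Set.uIcc_of_ge h, min_eq_right h, max_eq_left h]

/-- Any closed interval inside `[0,1]` that maps onto `[0,1]` contains a surjective interval. -/
lemma exists_si (h : ℝ → ℝ) (hc : ContinuousOn h (Set.Icc 0 1))
    (hm : Set.MapsTo h (Set.Icc 0 1) (Set.Icc 0 1)) {p q : ℝ} (hpq : p ≤ q)
    (hsub : Set.Icc p q ⊆ Set.Icc 0 1) (hsurj : Set.Icc (0:ℝ) 1 ⊆ h '' Set.Icc p q) :
    ∃ S, S ⊆ Set.Icc p q ∧ SurjInterval h S := by
  have hcpq : ContinuousOn h (Set.Icc p q) := hc.mono hsub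
  set K0 : Set ℝ := Set.Icc p q ∩ h ⁻¹' {0} with hK0
  set K1 : Set ℝ := Set.Icc p q ∩ h ⁻¹' {1} with hK1
  have hK0c : IsCompact K0 :=
    isCompact_Icc.of_isClosed_subset
      (hcpq.preimage_isClosed_of_isClosed isClosed_Icc isClosed_singleton)
      Set.inter_subset_left
  have hK1c : IsCompact K1 :=
    isCompact_Icc.of_isClosed_subset
      (hcpq.preimage_isClosed_of_isClosed isClosed_Icc isClosed_singleton)
      Set.inter_subset_left
  have hKc : IsCompact (K0 ×ˢ K1) := hK0c.prod hK1c
  have hKne : (K0 ×ˢ K1).Nonempty := by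
    obtain ⟨u, hu, hu0⟩ := hsurj (Set.left_mem_Icc.2 zero_le_one)
    obtain ⟨v, hv, hv1⟩ := hsurj (Set.right_mem_Icc.2 zero_le_one)
    exact ⟨(u, v), ⟨⟨hu, hu0⟩, ⟨hv, hv1⟩⟩⟩
  obtain ⟨z, hz, hzmin⟩ := hKc.exists_isMinOn hKne
    ((continuous_fst.sub continuous_snd).abs.continuousOn
      (f := fun x : ℝ × ℝ => |x.1 - x.2|))
  obtain ⟨⟨hz1pq, hz10⟩, ⟨hz2pq, hz21⟩⟩ := hz
  simp only [Set.mem_preimage, Set.mem_singleton_iff] at hz10 hz21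
  set a := min z.1 z.2 with ha
  set b := max z.1 z.2 with hb
  have hab : a ≤ b := min_le_max
  have habpq : Set.Icc a b ⊆ Set.Icc p q := by
    intro x hx
    exact ⟨le_trans (le_min hz1pq.1 hz2pq.1) hx.1, le_trans hx.2 (max_le hz1pq.2 hz2pq.2)⟩
  have hab01 : Set.Icc a b ⊆ Set.Icc 0 1 := habpq.trans hsub
  have hkey : Set.uIcc z.1 z.2 = Set.Icc a b := uIcc_eq_Icc_minmax z.1 z.2
  have himg : h '' Set.Icc a b = Set.Icc 0 1 := by
    apply Set.Subset.antisymm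
    · exact Set.image_subset_iff.2 fun x hx => hm (hab01 hx)
    · have hres : ContinuousOn h (Set.uIcc z.1 z.2) := by
        rw [hkey]; exact hcpq.mono habpq
      have := intermediate_value_uIcc hres
      rw [hz10, hz21, hkey, Set.uIcc_of_le zero_le_one] at this
      exact this
  refine ⟨Set.Icc a b, habpq, a, b, hab, rfl, hab01, himg, ?_⟩
  intro c d hss heq
  obtain ⟨u', hu', hu'0⟩ : (0:ℝ) ∈ h '' Set.Icc c d := heq ▸ Set.left_mem_Icc.2 zero_le_one
  obtain ⟨v', hv', hv'1⟩ : (1:ℝ) ∈ h '' Set.Icc c d := heq ▸ Set.right_mem_Icc.2 zero_le_one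
  have hcd : c ≤ d := le_trans hu'.1 hu'.2
  have hsub' : Set.Icc c d ⊆ Set.Icc a b := hss.subset
  have hac : a ≤ c := (hsub' (Set.left_mem_Icc.2 hcd)).1
  have hdb : d ≤ b := (hsub' (Set.right_mem_Icc.2 hcd)).2
  have hlt : d - c < b - a := by
    rcases eq_or_lt_of_le hac with h1 | h1
    · rcases eq_or_lt_of_le hdb with h2 | h2
      · exact absurd (by rw [h1, h2]) hss.ne
      · linarith
    · linarith
  have hmin : |z.1 - z.2| ≤ |u' - v'| := by
    have hmem : (u', v') ∈ K0 ×ˢ K1 :=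
      ⟨⟨habpq (hsub' hu'), hu'0⟩, ⟨habpq (hsub' hv'), hv'1⟩⟩
    exact hzmin hmem
  have h1 : |z.1 - z.2| = b - a := by rw [ha, hb, ← max_sub_min_eq_abs]; rw [max_comm, min_comm]
  have h2 : |u' - v'| ≤ d - c := by
    rw [abs_sub_le_iff]
    exact ⟨by linarith [hu'.1, hu'.2, hv'.1, hv'.2], by linarith [hu'.1, hu'.2, hv'.1, hv'.2]⟩
  linarith

/-- Structure of a surjective interval: endpoints take values `0` and `1`, and no interior
point takes value `0` or `1`. -/
lemma si_struct (f : ℝ → ℝ) (hfc : ContinuousOn f (Set.Icc 0 1))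
    (hfm' : Set.MapsTo f (Set.Icc 0 1) (Set.Icc 0 1)) {A : Set ℝ}
    (hA : SurjInterval f A) :
    ∃ a b : ℝ, a < b ∧ A = Set.Icc a b ∧ Set.Icc a b ⊆ Set.Icc 0 1 ∧
      f '' Set.Icc a b = Set.Icc 0 1 ∧
      ((f a = 0 ∧ f b = 1) ∨ (f a = 1 ∧ f b = 0)) ∧
      ∀ x ∈ Set.Ioo a b, f x ≠ 0 ∧ f x ≠ 1 := by
  obtain ⟨a, b, hab, rfl, hsub, himg, hmin⟩ := hA
  have hcab : ContinuousOn f (Set.Icc a b) := hfc.mono hsub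
  obtain ⟨u, hu, hu0⟩ : (0:ℝ) ∈ f '' Set.Icc a b := himg ▸ Set.left_mem_Icc.2 zero_le_one
  obtain ⟨v, hv, hv1⟩ : (1:ℝ) ∈ f '' Set.Icc a b := himg ▸ Set.right_mem_Icc.2 zero_le_one
  set m := min u v with hm
  set M := max u v with hM
  have hmM : m ≤ M := min_le_max
  have hsub' : Set.Icc m M ⊆ Set.Icc a b := fun x hx =>
    ⟨le_trans (le_min hu.1 hv.1) hx.1, le_trans hx.2 (max_le hu.2 hv.2)⟩
  have hkey : Set.uIcc u v = Set.Icc m M := uIcc_eq_Icc_minmax u v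
  have himg' : f '' Set.Icc m M = Set.Icc 0 1 := by
    apply Set.Subset.antisymm
    · exact Set.image_subset_iff.2 fun x hx => hfm' (hsub (hsub' hx))
    · have hres : ContinuousOn f (Set.uIcc u v) := by
        rw [hkey]; exact hcab.mono hsub'
      have := intermediate_value_uIcc hres
      rw [hu0, hv1, hkey, Set.uIcc_of_le zero_le_one] at this
      exact this
  have heqI : Set.Icc m M = Set.Icc a b := by
    by_contra hne
    exact hmin m M ⟨hsub', fun h => hne (Set.Subset.antisymm hsub' h)⟩ himg'
  obtain ⟨hma, hMb⟩ := Icc_eq_endpoints hmM heqI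
  have hf_ends : (f a = 0 ∧ f b = 1) ∨ (f a = 1 ∧ f b = 0) := by
    rcases le_total u v with huv | huv
    · left
      constructor
      · rw [← hma, hm, min_eq_left huv]; exact hu0
      · rw [← hMb, hM, max_eq_right huv]; exact hv1
    · right
      constructor
      · rw [← hma, hm, min_eq_right huv]; exact hv1
      · rw [← hMb, hM, max_eq_left huv]; exact hu0
  have hab' : a < b := by
    rcases eq_or_lt_of_le hab with h | h
    · exfalso
      rcases hf_ends with ⟨h0, h1⟩ | ⟨h0, h1⟩ <;> rw [h] at h0 <;> rw [h0] at h1 <;>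
        norm_num at h1
    · exact h
  have subimg : ∀ x y : ℝ, x ≤ y → Set.Icc x y ⊆ Set.Icc a b →
      ((f x = 0 ∧ f y = 1) ∨ (f x = 1 ∧ f y = 0)) → f '' Set.Icc x y = Set.Icc 0 1 := by
    intro x y hxy hxy_sub hends
    apply Set.Subset.antisymm
    · exact Set.image_subset_iff.2 fun w hw => hfm' (hsub (hxy_sub hw))
    · have hres : ContinuousOn f (Set.uIcc x y) := by
        rw [Set.uIcc_of_le hxy]; exact hcab.mono hxy_sub
      have := intermediate_value_uIcc hres
      rcases hends with ⟨h0, h1⟩ | ⟨h0, h1⟩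
      · rw [h0, h1, Set.uIcc_of_le zero_le_one, Set.uIcc_of_le hxy] at this
        exact this
      · rw [h0, h1, Set.uIcc_comm, Set.uIcc_of_le zero_le_one, Set.uIcc_of_le hxy] at this
        exact this
  refine ⟨a, b, hab', rfl, hsub, himg, hf_ends, ?_⟩
  intro x hx
  constructor
  · intro hx0
    rcases hf_ends with ⟨h0, h1⟩ | ⟨h0, h1⟩
    · exact hmin x b ⟨Set.Icc_subset_Icc (le_of_lt hx.1) le_rfl,
        fun hcon => absurd (hcon (Set.left_mem_Icc.2 hab)).1 (not_le.2 hx.1)⟩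
        (subimg x b (le_of_lt hx.2) (Set.Icc_subset_Icc (le_of_lt hx.1) le_rfl)
          (Or.inl ⟨hx0, h1⟩))
    · exact hmin a x ⟨Set.Icc_subset_Icc le_rfl (le_of_lt hx.2),
        fun hcon => absurd (hcon (Set.right_mem_Icc.2 hab)).2 (not_le.2 hx.2)⟩
        (subimg a x (le_of_lt hx.1) (Set.Icc_subset_Icc le_rfl (le_of_lt hx.2))
          (Or.inr ⟨h0, hx0⟩))
  · intro hx1
    rcases hf_ends with ⟨h0, h1⟩ | ⟨h0, h1⟩
    · exact hmin a x ⟨Set.Icc_subset_Icc le_rfl (le_of_lt hx.2),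
        fun hcon => absurd (hcon (Set.right_mem_Icc.2 hab)).2 (not_le.2 hx.2)⟩
        (subimg a x (le_of_lt hx.1) (Set.Icc_subset_Icc le_rfl (le_of_lt hx.2))
          (Or.inl ⟨h0, hx1⟩))
    · exact hmin x b ⟨Set.Icc_subset_Icc (le_of_lt hx.1) le_rfl,
        fun hcon => absurd (hcon (Set.left_mem_Icc.2 hab)).1 (not_le.2 hx.1)⟩
        (subimg x b (le_of_lt hx.2) (Set.Icc_subset_Icc (le_of_lt hx.1) le_rfl)
          (Or.inr ⟨hx1, h1⟩))

/-- Two distinct surjective intervals are (essentially) disjoint and hence ordered. -/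
lemma si_sep {f : ℝ → ℝ} {a1 b1 a2 b2 : ℝ} (h1 : a1 < b1) (h2 : a2 < b2)
    (e2 : (f a2 = 0 ∧ f b2 = 1) ∨ (f a2 = 1 ∧ f b2 = 0))
    (e1 : (f a1 = 0 ∧ f b1 = 1) ∨ (f a1 = 1 ∧ f b1 = 0))
    (i1 : ∀ x ∈ Set.Ioo a1 b1, f x ≠ 0 ∧ f x ≠ 1)
    (i2 : ∀ x ∈ Set.Ioo a2 b2, f x ≠ 0 ∧ f x ≠ 1)
    (hne : Set.Icc a1 b1 ≠ Set.Icc a2 b2) :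
    b1 ≤ a2 ∨ b2 ≤ a1 := by
  by_contra hcon
  push_neg at hcon
  obtain ⟨h12, h21⟩ := hcon
  have enda1 : f a1 = 0 ∨ f a1 = 1 := by rcases e1 with ⟨h, _⟩ | ⟨h, _⟩; exacts [Or.inl h, Or.inr h]
  have enda2 : f a2 = 0 ∨ f a2 = 1 := by rcases e2 with ⟨h, _⟩ | ⟨h, _⟩; exacts [Or.inl h, Or.inr h]
  have endb1 : f b1 = 0 ∨ f b1 = 1 := by rcases e1 with ⟨_, h⟩ | ⟨_, h⟩; exacts [Or.inr h, Or.inl h]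
  have endb2 : f b2 = 0 ∨ f b2 = 1 := by rcases e2 with ⟨_, h⟩ | ⟨_, h⟩; exacts [Or.inr h, Or.inl h]
  rcases lt_trichotomy a1 a2 with h | h | h
  · have hmem : a2 ∈ Set.Ioo a1 b1 := ⟨h, h12⟩
    rcases enda2 with h' | h'
    · exact (i1 _ hmem).1 h'
    · exact (i1 _ hmem).2 h'
  · have hb : b1 ≠ b2 := fun hb => hne (by rw [h, hb])
    rcases lt_or_gt_of_ne hb with hblt | hbgt
    · have hmem : b1 ∈ Set.Ioo a2 b2 := ⟨h ▸ h1, hblt⟩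
      rcases endb1 with h' | h'
      · exact (i2 _ hmem).1 h'
      · exact (i2 _ hmem).2 h'
    · have hmem : b2 ∈ Set.Ioo a1 b1 := ⟨h ▸ h2, hbgt⟩
      rcases endb2 with h' | h'
      · exact (i1 _ hmem).1 h'
      · exact (i1 _ hmem).2 h'
  · have hmem : a1 ∈ Set.Ioo a2 b2 := ⟨h, h21⟩
    rcases enda1 with h' | h'
    · exact (i2 _ hmem).1 h'
    · exact (i2 _ hmem).2 h'

/-- A surjective interval is not contained in a subsingleton. -/
lemma si_not_subsingleton {h : ℝ → ℝ} {S T : Set ℝ} (hS : SurjInterval h S)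
    (hT : T.Subsingleton) (hsub : S ⊆ T) : False := by
  obtain ⟨a, b, _, rfl, _, himg, _⟩ := hS
  obtain ⟨u, hu, hu0⟩ : (0:ℝ) ∈ h '' Set.Icc a b := himg ▸ Set.left_mem_Icc.2 zero_le_one
  obtain ⟨v, hv, hv1⟩ : (1:ℝ) ∈ h '' Set.Icc a b := himg ▸ Set.right_mem_Icc.2 zero_le_one
  have huv : u = v := hT (hsub hu) (hsub hv)
  rw [huv, hv1] at hu0
  norm_num at hu0

/-- Core construction: given ordered surjective interval data for `f` and `g`,
the composition has three surjective intervals. -/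
lemma main_core (f g : ℝ → ℝ)
    (hfc : ContinuousOn f (Set.Icc 0 1)) (hfm : Set.MapsTo f (Set.Icc 0 1) (Set.Icc 0 1))
    (hgc : ContinuousOn g (Set.Icc 0 1)) (hgm : Set.MapsTo g (Set.Icc 0 1) (Set.Icc 0 1))
    {a1 b1 a2 b2 c1 d1 c2 d2 : ℝ}
    (ha1b1 : a1 < b1) (hb1a2 : b1 ≤ a2) (ha2b2 : a2 < b2)
    (hA1sub : Set.Icc a1 b1 ⊆ Set.Icc 0 1) (hA2sub : Set.Icc a2 b2 ⊆ Set.Icc 0 1)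
    (hA1img : f '' Set.Icc a1 b1 = Set.Icc 0 1) (hA2img : f '' Set.Icc a2 b2 = Set.Icc 0 1)
    (hc1d1 : c1 < d1) (hd1c2 : d1 ≤ c2) (hc2d2 : c2 < d2)
    (hB1sub : Set.Icc c1 d1 ⊆ Set.Icc 0 1) (hB2sub : Set.Icc c2 d2 ⊆ Set.Icc 0 1)
    (hB1img : g '' Set.Icc c1 d1 = Set.Icc 0 1) (hB2img : g '' Set.Icc c2 d2 = Set.Icc 0 1)
    (hB1end : (g c1 = 0 ∧ g d1 = 1) ∨ (g c1 = 1 ∧ g d1 = 0)) :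
    ∃ A B C : Set ℝ, SurjInterval (f ∘ g) A ∧ SurjInterval (f ∘ g) B ∧
      SurjInterval (f ∘ g) C ∧ A ≠ B ∧ A ≠ C ∧ B ≠ C := by
  have hhc : ContinuousOn (f ∘ g) (Set.Icc 0 1) := hfc.comp hgc hgm
  have hhm : Set.MapsTo (f ∘ g) (Set.Icc 0 1) (Set.Icc 0 1) := hfm.comp hgm
  have h0a1 : (0:ℝ) ≤ a1 := (hA1sub (Set.left_mem_Icc.2 (le_of_lt ha1b1))).1
  have hb2le1 : b2 ≤ 1 := (hA2sub (Set.right_mem_Icc.2 (le_of_lt ha2b2))).2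
  have ha2pos : (0:ℝ) < a2 := lt_of_lt_of_le (lt_of_le_of_lt h0a1 ha1b1) hb1a2
  have ha2lt1 : a2 < 1 := lt_of_lt_of_le ha2b2 hb2le1
  obtain ⟨s, hs, hgs⟩ : a2 ∈ g '' Set.Icc c1 d1 := by
    rw [hB1img]; exact ⟨le_of_lt ha2pos, le_of_lt ha2lt1⟩
  have hgc1 : g c1 = 0 ∨ g c1 = 1 := by
    rcases hB1end with ⟨h, _⟩ | ⟨h, _⟩; exacts [Or.inl h, Or.inr h]
  have hgd1 : g d1 = 0 ∨ g d1 = 1 := by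
    rcases hB1end with ⟨_, h⟩ | ⟨_, h⟩; exacts [Or.inr h, Or.inl h]
  have hc1s : c1 < s := by
    rcases eq_or_lt_of_le hs.1 with h | h
    · exfalso; rw [← h] at hgs
      rcases hgc1 with h' | h' <;> rw [h'] at hgs <;> [exact absurd hgs.symm (ne_of_gt ha2pos);
        exact absurd hgs.symm (ne_of_lt ha2lt1)]
    · exact h
  have hsd1 : s < d1 := by
    rcases eq_or_lt_of_le hs.2 with h | h
    · exfalso; rw [h] at hgs
      rcases hgd1 with h' | h' <;> rw [h'] at hgs <;> [exact absurd hgs.symm (ne_of_gt ha2pos);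
        exact absurd hgs.symm (ne_of_lt ha2lt1)]
    · exact h
  -- helper: a subinterval of [0,1] whose g-image contains a surjective interval of f maps onto
  have helper : ∀ x y : ℝ, x ≤ y → Set.Icc x y ⊆ Set.Icc 0 1 →
      (Set.Icc a1 b1 ⊆ g '' Set.Icc x y ∨ Set.Icc a2 b2 ⊆ g '' Set.Icc x y) →
      Set.Icc (0:ℝ) 1 ⊆ (f ∘ g) '' Set.Icc x y := by
    intro x y _ _ hcase
    rw [Set.image_comp]
    rcases hcase with hc | hc
    · calc Set.Icc (0:ℝ) 1 = f '' Set.Icc a1 b1 := hA1img.symm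
        _ ⊆ f '' (g '' Set.Icc x y) := Set.image_mono hc
    · calc Set.Icc (0:ℝ) 1 = f '' Set.Icc a2 b2 := hA2img.symm
        _ ⊆ f '' (g '' Set.Icc x y) := Set.image_mono hc
  have hP1sub : Set.Icc c1 s ⊆ Set.Icc 0 1 :=
    (Set.Icc_subset_Icc le_rfl (le_of_lt hsd1)).trans hB1sub
  have hP2sub : Set.Icc s d1 ⊆ Set.Icc 0 1 :=
    (Set.Icc_subset_Icc (le_of_lt hc1s) le_rfl).trans hB1sub
  have hgim1 : Set.uIcc (g c1) a2 ⊆ g '' Set.Icc c1 s := by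
    have hres : ContinuousOn g (Set.uIcc c1 s) := by
      rw [Set.uIcc_of_le (le_of_lt hc1s)]; exact hgc.mono hP1sub
    have := intermediate_value_uIcc hres
    rw [hgs, Set.uIcc_of_le (le_of_lt hc1s)] at this
    exact this
  have hgim2 : Set.uIcc a2 (g d1) ⊆ g '' Set.Icc s d1 := by
    have hres : ContinuousOn g (Set.uIcc s d1) := by
      rw [Set.uIcc_of_le (le_of_lt hsd1)]; exact hgc.mono hP2sub
    have := intermediate_value_uIcc hres
    rw [hgs, Set.uIcc_of_le (le_of_lt hsd1)] at this
    exact this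
  have claim1 : Set.Icc (0:ℝ) 1 ⊆ (f ∘ g) '' Set.Icc c1 s := by
    apply helper c1 s (le_of_lt hc1s) hP1sub
    rcases hB1end with ⟨h0, _⟩ | ⟨h0, _⟩
    · left
      refine (Set.Icc_subset_Icc h0a1 hb1a2).trans ?_
      rw [h0, Set.uIcc_of_le (le_of_lt ha2pos)] at hgim1
      exact hgim1
    · right
      refine (Set.Icc_subset_Icc le_rfl hb2le1).trans ?_
      rw [h0, Set.uIcc_of_ge (le_of_lt ha2lt1)] at hgim1
      exact hgim1
  have claim2 : Set.Icc (0:ℝ) 1 ⊆ (f ∘ g) '' Set.Icc s d1 := by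
    apply helper s d1 (le_of_lt hsd1) hP2sub
    rcases hB1end with ⟨_, h1⟩ | ⟨_, h1⟩
    · right
      refine (Set.Icc_subset_Icc le_rfl hb2le1).trans ?_
      rw [h1, Set.uIcc_of_le (le_of_lt ha2lt1)] at hgim2
      exact hgim2
    · left
      refine (Set.Icc_subset_Icc h0a1 hb1a2).trans ?_
      rw [h1, Set.uIcc_of_ge (le_of_lt ha2pos)] at hgim2
      exact hgim2
  have claim3 : Set.Icc (0:ℝ) 1 ⊆ (f ∘ g) '' Set.Icc c2 d2 := by
    rw [Set.image_comp, hB2img]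
    calc Set.Icc (0:ℝ) 1 = f '' Set.Icc a1 b1 := hA1img.symm
      _ ⊆ f '' Set.Icc 0 1 := Set.image_mono hA1sub
  obtain ⟨S1, hS1sub, hS1⟩ := exists_si (f ∘ g) hhc hhm (le_of_lt hc1s) hP1sub claim1
  obtain ⟨S2, hS2sub, hS2⟩ := exists_si (f ∘ g) hhc hhm (le_of_lt hsd1) hP2sub claim2
  obtain ⟨S3, hS3sub, hS3⟩ := exists_si (f ∘ g) hhc hhm (le_of_lt hc2d2) hB2sub claim3
  refine ⟨S1, S2, S3, hS1, hS2, hS3, ?_, ?_, ?_⟩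
  · intro heq
    apply si_not_subsingleton hS1 (T := Set.Icc c1 s ∩ Set.Icc s d1)
      (fun x hx y hy => by
        have hxs : x = s := le_antisymm hx.1.2 hx.2.1
        have hys : y = s := le_antisymm hy.1.2 hy.2.1
        rw [hxs, hys])
      (Set.subset_inter hS1sub (heq ▸ hS2sub))
  · intro heq
    apply si_not_subsingleton hS1 (T := Set.Icc c1 s ∩ Set.Icc c2 d2)
      (fun x hx _ _ => absurd (le_trans hx.2.1 hx.1.2)
        (not_le.2 (lt_of_lt_of_le hsd1 hd1c2)))
      (Set.subset_inter hS1sub (heq ▸ hS3sub))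
  · intro heq
    apply si_not_subsingleton hS2 (T := Set.Icc s d1 ∩ Set.Icc c2 d2)
      (fun x hx y hy => by
        have hx1 : x = c2 := le_antisymm (le_trans hx.1.2 hd1c2) hx.2.1
        have hy1 : y = c2 := le_antisymm (le_trans hy.1.2 hd1c2) hy.2.1
        rw [hx1, hy1])
      (Set.subset_inter hS2sub (heq ▸ hS3sub))

theorem comp_has_three_surjective_intervals
    (f g : ℝ → ℝ)
    (hfc : ContinuousOn f (Set.Icc 0 1)) (hfm : Set.MapsTo f (Set.Icc 0 1) (Set.Icc 0 1))
    (hfs : f '' Set.Icc (0 : ℝ) 1 = Set.Icc (0 : ℝ) 1)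
    (hgc : ContinuousOn g (Set.Icc 0 1)) (hgm : Set.MapsTo g (Set.Icc 0 1) (Set.Icc 0 1))
    (hgs : g '' Set.Icc (0 : ℝ) 1 = Set.Icc (0 : ℝ) 1)
    (hf2 : ∃ A B : Set ℝ, SurjInterval f A ∧ SurjInterval f B ∧ A ≠ B)
    (hg2 : ∃ A B : Set ℝ, SurjInterval g A ∧ SurjInterval g B ∧ A ≠ B) :
    ∃ A B C : Set ℝ, SurjInterval (f ∘ g) A ∧ SurjInterval (f ∘ g) B ∧
      SurjInterval (f ∘ g) C ∧ A ≠ B ∧ A ≠ C ∧ B ≠ C := by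
  obtain ⟨A, B, hA, hB, hABne⟩ := hf2
  obtain ⟨a1, b1, ha1b1, hAeq, hA1sub, hA1img, hA1end, hA1int⟩ := si_struct f hfc hfm hA
  obtain ⟨a2, b2, ha2b2, hBeq, hA2sub, hA2img, hA2end, hA2int⟩ := si_struct f hfc hfm hB
  have hfne : Set.Icc a1 b1 ≠ Set.Icc a2 b2 := by
    rw [← hAeq, ← hBeq]; exact hABne
  obtain ⟨C, D, hC, hD, hCDne⟩ := hg2
  obtain ⟨c1, d1, hc1d1, hCeq, hB1sub, hB1img, hB1end, hB1int⟩ := si_struct g hgc hgm hC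
  obtain ⟨c2, d2, hc2d2, hDeq, hB2sub, hB2img, hB2end, hB2int⟩ := si_struct g hgc hgm hD
  have hgne : Set.Icc c1 d1 ≠ Set.Icc c2 d2 := by
    rw [← hCeq, ← hDeq]; exact hCDne
  rcases si_sep ha1b1 ha2b2 hA2end hA1end hA1int hA2int hfne with hford | hford <;>
    rcases si_sep hc1d1 hc2d2 hB2end hB1end hB1int hB2int hgne with hgord | hgord
  · exact main_core f g hfc hfm hgc hgm ha1b1 hford ha2b2 hA1sub hA2sub hA1img hA2img
      hc1d1 hgord hc2d2 hB1sub hB2sub hB1img hB2img hB1end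
  · exact main_core f g hfc hfm hgc hgm ha1b1 hford ha2b2 hA1sub hA2sub hA1img hA2img
      hc2d2 hgord hc1d1 hB2sub hB1sub hB2img hB1img hB2end
  · exact main_core f g hfc hfm hgc hgm ha2b2 hford ha1b1 hA2sub hA1sub hA2img hA1img
      hc1d1 hgord hc2d2 hB1sub hB2sub hB1img hB2img hB1end
  · exact main_core f g hfc hfm hgc hgm ha2b2 hford ha1b1 hA2sub hA1sub hA2img hA1img
      hc2d2 hgord hc1d1 hB2sub hB1sub hB2img hB1img hB2end
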